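/- For any node u in a simple graph and any fixed ℓ ≥ 3, the ℓth-order local clustering coefficient satisfies 0 ≤ C_ℓ(u) ≤ √(C_2(u)), where C_2(u) is the ordinary local clustering coefficient (edge density of the neighborhood of u). -/

import Mathlib

attribute [-instance] instDecidableEqFin

set_option maxHeartbeats 1000000

open Finset Colex
open scoped FinsetFamily

namespace KKAux

noncomputable def Fi (a : ℕ) (t : ℝ) (j : ℕ) : ℝ :=
  (1-t) * (a.choose j : ℝ) + t * ((a+1).choose j : ℝ)

lemma Fi_zero (a : ℕ) (t : ℝ) : Fi a t 0 = 1 := by simp [Fi]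

lemma Fi_eq (a : ℕ) (t : ℝ) (j : ℕ) (hj : 1 ≤ j) :
    Fi a t j = (a.choose j : ℝ) + t * (a.choose (j-1) : ℝ) := by
  obtain ⟨k, rfl⟩ := Nat.exists_eq_add_of_le hj
  have h : (a+1).choose (1+k) = a.choose k + a.choose (1+k) := by
    rw [show 1+k = k+1 from by omega]
    exact Nat.choose_succ_succ a k
  rw [Fi, h]
  have : 1 + k - 1 = k := by omega
  rw [this]
  push_cast
  ring

lemma Fi_ge_left (a : ℕ) {t : ℝ} (j : ℕ) (ht0 : 0 ≤ t) :
    (a.choose j : ℝ) ≤ Fi a t j := by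
  have h : (a.choose j : ℝ) ≤ ((a+1).choose j : ℝ) := by
    exact_mod_cast Nat.choose_le_choose j (by omega)
  rw [Fi]; nlinarith

lemma Fi_le_right (a : ℕ) {t : ℝ} (j : ℕ) (ht1 : t ≤ 1) :
    Fi a t j ≤ (((a+1)).choose j : ℝ) := by
  have h : (a.choose j : ℝ) ≤ ((a+1).choose j : ℝ) := by
    exact_mod_cast Nat.choose_le_choose j (by omega)
  rw [Fi]; nlinarith

lemma Fi_pos (a : ℕ) {t : ℝ} (j : ℕ) (ht0 : 0 ≤ t) (hja : j ≤ a) : (1:ℝ) ≤ Fi a t j := by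
  have h : (1:ℝ) ≤ (a.choose j : ℝ) := by
    exact_mod_cast Nat.choose_pos hja
  linarith [Fi_ge_left a j ht0]

lemma choose_mul_eq (n j : ℕ) (hj : 1 ≤ j) (hn : j ≤ n) :
    j * n.choose j = (n - j + 1) * n.choose (j-1) := by
  obtain ⟨k, rfl⟩ := Nat.exists_eq_add_of_le hj
  have h := Nat.choose_succ_right_eq n k
  have e1 : 1 + k = k + 1 := by omega
  have e2 : 1 + k - 1 = k := by omega
  have e3 : n - (1 + k) + 1 = n - k := by omega
  rw [e1, e2, e3] at *
  rw [Nat.mul_comm, h, Nat.mul_comm]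

lemma cross (a c j : ℕ) (hca : c ≤ a) (hj : 1 ≤ j) :
    a.choose (j-1) * c.choose j ≤ a.choose j * c.choose (j-1) := by
  rcases le_or_gt j c with hjc | hjc
  · have hja : j ≤ a := hjc.trans hca
    have h1 := choose_mul_eq a j hj hja
    have h2 := choose_mul_eq c j hj hjc
    have key : j * (a.choose (j-1) * c.choose j) ≤ j * (a.choose j * c.choose (j-1)) := by
      calc j * (a.choose (j-1) * c.choose j) = a.choose (j-1) * (j * c.choose j) := by ring
        _ = a.choose (j-1) * ((c - j + 1) * c.choose (j-1)) := by rw [h2]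
        _ = (c - j + 1) * (a.choose (j-1) * c.choose (j-1)) := by ring
        _ ≤ (a - j + 1) * (a.choose (j-1) * c.choose (j-1)) := by
            apply Nat.mul_le_mul_right; omega
        _ = ((a - j + 1) * a.choose (j-1)) * c.choose (j-1) := by ring
        _ = (j * a.choose j) * c.choose (j-1) := by rw [h1]
        _ = j * (a.choose j * c.choose (j-1)) := by ring
    exact Nat.le_of_mul_le_mul_left key (by omega)
  · rw [Nat.choose_eq_zero_of_lt hjc, Nat.mul_zero]
    exact Nat.zero_le _

lemma shadow_card_pos {α : Type*} [DecidableEq α] {𝒜 : Finset (Finset α)}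
    (hne : 𝒜.Nonempty) (hsz : ∀ u ∈ 𝒜, u.Nonempty) : 0 < #(∂ 𝒜) := by
  obtain ⟨u, hu⟩ := hne
  obtain ⟨x, hx⟩ := hsz u hu
  exact card_pos.2 ⟨u.erase x, erase_mem_shadow hu hx⟩

/-- In a finite linear order, there is a lower-closed subset of any given size. -/
lemma exists_lower_subset {γ : Type*} [LinearOrder γ] (T : Finset γ) :
    ∀ N : ℕ, N ≤ #T → ∃ T' ⊆ T, #T' = N ∧ ∀ x ∈ T', ∀ y ∈ T, y ≤ x → y ∈ T' := by
  intro N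
  induction N with
  | zero => intro _; exact ⟨∅, empty_subset _, rfl, by simp⟩
  | succ N ih =>
    intro hN
    obtain ⟨T', hsub, hcard, hlow⟩ := ih (by omega)
    have hne : (T \ T').Nonempty := by
      rw [← card_pos, card_sdiff_of_subset hsub]; omega
    set mel := (T \ T').min' hne with hmel
    have hmelmem : mel ∈ T \ T' := min'_mem _ _
    rw [mem_sdiff] at hmelmem
    refine ⟨insert mel T', ?_, ?_, ?_⟩
    · exact insert_subset hmelmem.1 hsub
    · rw [card_insert_of_notMem hmelmem.2, hcard]
    · intro x hx y hy hyx
      rw [mem_insert] at hx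
      rcases hx with rfl | hx
      · by_cases hyT' : y ∈ T'
        · exact mem_insert_of_mem hyT'
        · have h1 : mel ≤ y := min'_le _ _ (mem_sdiff.2 ⟨hy, hyT'⟩)
          have h2 : y = mel := le_antisymm hyx h1
          subst h2; exact mem_insert_self _ _
      · exact mem_insert_of_mem (hlow x hx y hy hyx)

/-- There is a colex initial segment of every size `1 ≤ N ≤ C(n,r)`. -/
lemma exists_initSeg' (n r N : ℕ) (hN1 : 1 ≤ N) (hN : N ≤ n.choose r) :
    ∃ s : Finset (Fin n), #s = r ∧ #(initSeg s) = N := by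
  classical
  set S : Finset (Finset (Fin n)) := univ.powersetCard r with hS
  have hScard : #S = n.choose r := by
    rw [hS, card_powersetCard, card_univ, Fintype.card_fin]
  set T : Finset (Colex (Finset (Fin n))) := S.image toColex with hT
  have hTcard : #T = n.choose r := by
    rw [hT, card_image_of_injective _ toColex.injective, hScard]
  obtain ⟨T', hsub, hcard, hlow⟩ := exists_lower_subset T N (by omega)
  set 𝒞 : Finset (Finset (Fin n)) := T'.image ofColex with h𝒞
  have h𝒞card : #𝒞 = N := by
    rw [h𝒞, card_image_of_injective _ ofColex.injective, hcard]
  have hmemS : ∀ t : Finset (Fin n), t ∈ 𝒞 → #t = r := by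
    intro t ht
    rw [h𝒞, mem_image] at ht
    obtain ⟨c, hc, rfl⟩ := ht
    have := hsub hc
    rw [hT, mem_image] at this
    obtain ⟨t₀, ht₀, rfl⟩ := this
    rw [hS, mem_powersetCard_univ] at ht₀
    simpa using ht₀
  have hinit : IsInitSeg 𝒞 r := by
    constructor
    · intro t ht; exact hmemS t ht
    · rintro s t hs ⟨hlt, hcardt⟩
      have hsT' : toColex s ∈ T' := by
        rw [h𝒞, mem_image] at hs
        obtain ⟨c, hc, rfl⟩ := hs
        simpa using hc
      have htT : toColex t ∈ T := by
        rw [hT, mem_image]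
        exact ⟨t, by rw [hS, mem_powersetCard_univ]; exact hcardt, rfl⟩
      have := hlow _ hsT' _ htT hlt.le
      rw [h𝒞, mem_image]
      exact ⟨toColex t, this, rfl⟩
  have hne : 𝒞.Nonempty := by rw [← card_pos, h𝒞card]; omega
  obtain ⟨s, hscard, heq⟩ := hinit.exists_initSeg hne
  exact ⟨s, hscard, by rw [← heq, h𝒞card]⟩


lemma card_initSeg_decomp {n : ℕ} (s : Finset (Fin n)) (hs : s.Nonempty) :
    #(initSeg s) = (s.max' hs : ℕ).choose #s + #(initSeg (s.erase (s.max' hs))) := by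
  classical
  set v := s.max' hs with hv
  set r := #s with hr
  have hvs : v ∈ s := s.max'_mem hs
  have hset : initSeg s = (Iio v).powersetCard r ∪ (initSeg (s.erase v)).image (insert v) := by
    ext t
    rw [mem_union, mem_initSeg, mem_powersetCard, mem_image]
    constructor
    · rintro ⟨hcard, hle⟩
      by_cases hvt : v ∈ t
      · right
        refine ⟨t.erase v, ?_, insert_erase hvt⟩
        rw [mem_initSeg]
        constructor
        · rw [card_erase_of_mem hvs, card_erase_of_mem hvt, hcard]
        · have hiff := Colex.toColex_sdiff_le_toColex_sdiff
            (singleton_subset_iff.2 hvt) (singleton_subset_iff.2 hvs)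
          rw [sdiff_singleton_eq_erase, sdiff_singleton_eq_erase] at hiff
          exact hiff.2 hle
      · left
        refine ⟨fun x hx => ?_, hcard.symm⟩
        rw [mem_Iio]
        have hxle : x ≤ v := Colex.forall_le_mono hle (fun b hb => s.le_max' b hb) x hx
        exact lt_of_le_of_ne hxle (fun h => hvt (h ▸ hx))
    · rintro (⟨hsub, hcard⟩ | ⟨t', ht', rfl⟩)
      · refine ⟨hcard.symm, ?_⟩
        refine le_of_lt (toColex_lt_toColex_iff_exists_forall_lt.2 ⟨v, hvs, ?_, ?_⟩)
        · intro hvt; exact absurd (mem_Iio.1 (hsub hvt)) (lt_irrefl v)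
        · exact fun b hb _ => mem_Iio.1 (hsub hb)
      · rw [mem_initSeg] at ht'
        have hlt' : ∀ b ∈ t', b < v := by
          intro b hb
          exact Colex.forall_lt_mono ht'.2
            (fun c hc => lt_of_le_of_ne (s.le_max' c (mem_of_mem_erase hc))
              (ne_of_mem_erase hc)) b hb
        have hvt' : v ∉ t' := fun h => lt_irrefl v (hlt' v h)
        constructor
        · rw [card_insert_of_notMem hvt', ← ht'.1, card_erase_of_mem hvs]
          have : 1 ≤ #s := card_pos.2 hs
          omega
        · have hiff := Colex.toColex_sdiff_le_toColex_sdiff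
            (singleton_subset_iff.2 (mem_insert_self v t')) (singleton_subset_iff.2 hvs)
          rw [sdiff_singleton_eq_erase, sdiff_singleton_eq_erase, erase_insert hvt'] at hiff
          exact hiff.1 ht'.2
  have hdisj : Disjoint ((Iio v).powersetCard r) ((initSeg (s.erase v)).image (insert v)) := by
    rw [disjoint_left]
    rintro t ht1 ht2
    rw [mem_powersetCard] at ht1
    rw [mem_image] at ht2
    obtain ⟨t', _, rfl⟩ := ht2
    exact absurd (mem_Iio.1 (ht1.1 (mem_insert_self v t'))) (lt_irrefl v)
  have hinj : Set.InjOn (insert v) (initSeg (s.erase v) : Set (Finset (Fin n))) := by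
    intro t₁ h₁ t₂ h₂ heq
    have hnv : ∀ t' : Finset (Fin n), t' ∈ initSeg (s.erase v) → v ∉ t' := by
      intro t' ht' hmem
      rw [mem_initSeg] at ht'
      have := Colex.forall_lt_mono ht'.2
        (fun c hc => lt_of_le_of_ne (s.le_max' c (mem_of_mem_erase hc)) (ne_of_mem_erase hc))
        v hmem
      exact lt_irrefl v this
    have e1 := erase_insert (hnv t₁ (by simpa using h₁))
    have e2 := erase_insert (hnv t₂ (by simpa using h₂))
    rw [← e1, ← e2, heq]
  rw [hset, card_union_of_disjoint hdisj, card_powersetCard, Fin.card_Iio,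
    card_image_of_injOn hinj]


/-- Linear-interpolation Lovász form of the Kruskal–Katona theorem. -/
theorem LL : ∀ r : ℕ, 1 ≤ r → ∀ (n a : ℕ) (t : ℝ), r ≤ a → 0 ≤ t → t ≤ 1 →
    ∀ 𝒜 : Finset (Finset (Fin n)), (↑𝒜 : Set (Finset (Fin n))).Sized r →
    Fi a t r ≤ (#𝒜 : ℝ) → Fi a t (r-1) ≤ (#(∂ 𝒜) : ℝ) := by
  intro r
  induction r with
  | zero => omega
  | succ r ih =>
    intro _ n a t hra ht0 ht1 𝒜 hsized hcard
    set R := r + 1 with hR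
    -- 𝒜 is nonempty
    have hA1 : (1:ℝ) ≤ (#𝒜 : ℝ) := le_trans (Fi_pos a R ht0 hra) hcard
    have hAne : 𝒜.Nonempty := by
      rw [← card_pos]
      exact_mod_cast lt_of_lt_of_le zero_lt_one hA1
    -- base case r = 0, i.e. R = 1
    rcases Nat.eq_zero_or_pos r with hr0 | hrpos
    · subst hr0
      rw [show R - 1 = 0 from by omega, Fi_zero]
      have : 0 < #(∂ 𝒜) := by
        apply shadow_card_pos hAne
        intro u hu
        rw [← card_pos, hsized hu]
        omega
      exact_mod_cast this
    -- main case r ≥ 1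
    -- construct the initial segment of the same size
    have hNle : #𝒜 ≤ n.choose R := by
      have hsub : 𝒜 ⊆ univ.powersetCard R := by
        intro u hu
        rw [mem_powersetCard_univ]
        exact hsized hu
      have := card_le_card hsub
      rwa [card_powersetCard, card_univ, Fintype.card_fin] at this
    have hN1 : 1 ≤ #𝒜 := by exact_mod_cast lt_of_lt_of_le zero_lt_one hA1
    obtain ⟨s, hscard, hsegcard⟩ := exists_initSeg' n R #𝒜 hN1 hNle
    have hKK : #(∂ (initSeg s)) ≤ #(∂ 𝒜) := by
      apply Finset.kruskal_katona hsized (le_of_eq hsegcard)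
      have := isInitSeg_initSeg (s := s)
      rwa [hscard] at this
    have hs : s.Nonempty := by rw [← card_pos, hscard]; omega
    set v := s.max' hs with hv
    set mel := s.min' hs with hmel
    have hmv : mel < v := min'_lt_max'_of_card s (by omega)
    -- shadow of the initial segment
    have hsz2 : ∂ (initSeg s) = initSeg (s.erase mel) := Colex.shadow_initSeg hs
    have hem_ne : (s.erase mel).Nonempty := by
      rw [← card_pos, card_erase_of_mem (min'_mem s hs)]
      omega
    have hvem : v ∈ s.erase mel := mem_erase.2 ⟨hmv.ne', s.max'_mem hs⟩
    have hmaxem : (s.erase mel).max' hem_ne = v := by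
      apply le_antisymm
      · exact max'_le _ _ _ (fun y hy => s.le_max' y (mem_of_mem_erase hy))
      · exact le_max' _ _ hvem
    set s' := s.erase v with hs'
    have hs'card : #s' = r := by
      rw [hs', card_erase_of_mem (s.max'_mem hs), hscard]
      omega
    have hs'ne : s'.Nonempty := by rw [← card_pos, hs'card]; omega
    have hmel_s' : mel ∈ s' := mem_erase.2 ⟨hmv.ne, s.min'_mem hs⟩
    have hmins' : s'.min' hs'ne = mel := by
      apply le_antisymm
      · exact min'_le _ _ hmel_s'
      · exact le_min' _ _ _ (fun y hy => s.min'_le y (mem_of_mem_erase hy))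
    -- decomposition of the shadow
    have hcnt : #(s.erase mel) = r := by
      rw [card_erase_of_mem (s.min'_mem hs), hscard]
      omega
    have hdecS : #(initSeg (s.erase mel)) = (v : ℕ).choose r + #(∂ (initSeg s')) := by
      have h1 := card_initSeg_decomp (s.erase mel) hem_ne
      rw [hmaxem, hcnt] at h1
      rw [show (s.erase mel).erase v = s'.erase mel from erase_right_comm] at h1
      rw [Colex.shadow_initSeg hs'ne, hmins']
      exact h1
    -- decomposition of the segment itself
    have hdecN : (v : ℕ).choose R + #(initSeg s') = #𝒜 := by
      rw [← hsegcard, card_initSeg_decomp s hs, hscard]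
    -- the shadow of initSeg s' is the relevant quantity
    have hgoal_shape : ((v:ℕ).choose r : ℝ) + #(∂ (initSeg s')) ≤ (#(∂ 𝒜) : ℝ) := by
      have : ((v:ℕ).choose r + #(∂ (initSeg s')) : ℕ) ≤ #(∂ 𝒜) := by
        rw [← hdecS, ← hsz2]
        exact hKK
      exact_mod_cast this
    have hSized' : (↑(initSeg s') : Set (Finset (Fin n))).Sized r := by
      intro u hu
      rw [mem_coe, mem_initSeg] at hu
      rw [← hu.1, hs'card]
    -- v.val ≥ R - 1
    have hvR : R ≤ (v:ℕ) + 1 := by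
      have hsub : s ⊆ Iic v := fun y hy => mem_Iic.2 (s.le_max' y hy)
      have := card_le_card hsub
      rwa [Fin.card_Iic, hscard] at this
    rw [show R - 1 = r from by omega]
    set va := (v : ℕ) with hvadef
    have hrva : r ≤ va := by omega
    rcases lt_trichotomy va a with hlt | heq | hgt
    · -- case va < a : forces t = 0 and a = va + 1
      have hseg_le : #(initSeg s) ≤ (va+1).choose R := by
        have hsub : initSeg s ⊆ (Iic v).powersetCard R := by
          intro w hw
          rw [mem_powersetCard]
          refine ⟨fun x hx => mem_Iic.2 ?_, ?_⟩
          · exact Colex.forall_le_mono (mem_initSeg.1 hw).2 (fun b hb => s.le_max' b hb) x hx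
          · exact ((mem_initSeg.1 hw).1).symm.trans hscard
        have := card_le_card hsub
        rwa [card_powersetCard, Fin.card_Iic] at this
      have hchain : Fi a t R ≤ ((va+1).choose R : ℝ) := by
        refine le_trans hcard ?_
        rw [← hsegcard]
        exact_mod_cast hseg_le
      have hmono : ((va+1).choose R : ℝ) ≤ (a.choose R : ℝ) := by
        exact_mod_cast Nat.choose_le_choose R (by omega)
      have hFiR : Fi a t R = (a.choose R : ℝ) + t * (a.choose r : ℝ) := by
        rw [Fi_eq a t R (by omega)]
        norm_num
        exact Or.inl (congrArg _ (by omega))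
      have htzero : t = 0 := by
        have h0 : t * (a.choose r : ℝ) ≤ 0 := by linarith
        have h1 : (0:ℝ) < (a.choose r : ℝ) := by
          exact_mod_cast Nat.choose_pos (show r ≤ a by omega)
        nlinarith
      subst htzero
      have hava : a = va + 1 := by
        by_contra hne
        have hlt2 : va + 1 < a := by omega
        have hstrict : (va+1).choose R < (va+2).choose R := by
          have hpas : (va+2).choose R = (va+1).choose r + (va+1).choose R :=
            Nat.choose_succ_succ (va+1) r
          have : 0 < (va+1).choose r := Nat.choose_pos (by omega)
          omega
        have hle2 : (va+2).choose R ≤ a.choose R := Nat.choose_le_choose R (by omega)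
        have : (a.choose R : ℝ) ≤ ((va+1).choose R : ℝ) := by linarith
        have : a.choose R ≤ (va+1).choose R := by exact_mod_cast this
        omega
      -- apply induction to initSeg s' with (va, 0)
      have hseg' : Fi va 0 r ≤ (#(initSeg s') : ℝ) := by
        have hNat : a.choose R ≤ #𝒜 := by
          have : (a.choose R : ℝ) ≤ (#𝒜 : ℝ) := by linarith
          exact_mod_cast this
        rw [hava] at hNat
        have hpas : (va+1).choose R = va.choose r + va.choose R := Nat.choose_succ_succ va r
        have : va.choose r ≤ #(initSeg s') := by omega
        rw [Fi_eq va 0 r (by omega)]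
        have hc : (va.choose r : ℝ) ≤ (#(initSeg s') : ℝ) := by exact_mod_cast this
        linarith
      have hcon := ih hrpos n va 0 hrva le_rfl zero_le_one (initSeg s') hSized' hseg'
      have hcon' : (va.choose (r-1) : ℝ) ≤ (#(∂ (initSeg s')) : ℝ) :=
        le_trans (Fi_ge_left va (r-1) le_rfl) hcon
      have hpas2 : (va+1).choose r = va.choose (r-1) + va.choose r := by
        have h := Nat.choose_succ_succ va (r-1)
        simp only [Nat.succ_eq_add_one] at h
        rwa [show r - 1 + 1 = r from by omega] at h
      have hsplit : (a.choose r : ℝ) = (va.choose (r-1) : ℝ) + (va.choose r : ℝ) := by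
        rw [hava]
        exact_mod_cast congrArg (Nat.cast (R := ℝ)) hpas2
      rw [Fi_eq a 0 r (by omega)]
      linarith [hgoal_shape]
    · -- main case va = a
      have hT : t * (a.choose r : ℝ) ≤ (#(initSeg s') : ℝ) := by
        have h1 : Fi a t R = (a.choose R : ℝ) + t * (a.choose r : ℝ) := by
          rw [Fi_eq a t R (by omega)]; norm_num; exact Or.inl (congrArg _ (by omega))
        have h2 : ((va.choose R : ℝ)) + (#(initSeg s') : ℝ) = (#𝒜 : ℝ) := by
          exact_mod_cast congrArg (Nat.cast (R := ℝ)) hdecN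
        rw [heq] at h2
        linarith
      have hs'segne : (initSeg s').Nonempty := initSeg_nonempty
      have hsuffices : ∀ x : ℝ, t * (a.choose (r-1) : ℝ) ≤ x →
          x ≤ (#(∂ (initSeg s')) : ℝ) → Fi a t r ≤ (#(∂ 𝒜) : ℝ) := by
        intro x hx1 hx2
        rw [Fi_eq a t r (by omega)]
        rw [heq] at hgoal_shape
        linarith
      rcases eq_or_lt_of_le (show 1 ≤ r from hrpos) with hr1 | hr2
      · -- r = 1
        refine hsuffices 1 ?_ ?_
        · rw [← hr1]; norm_num; exact ht1
        · have : 0 < #(∂ (initSeg s')) := by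
            apply shadow_card_pos hs'segne
            intro w hw
            rw [← card_pos, hSized' hw]
            omega
          exact_mod_cast this
      · -- r ≥ 2
        set T := t * (a.choose r : ℝ) with hTdef
        have hT0 : 0 ≤ T := mul_nonneg ht0 (by positivity)
        rcases lt_or_ge T 1 with hTlt | hT1
        · -- T < 1 : use (r, 0) in the induction
          have hseg1 : Fi r 0 r ≤ (#(initSeg s') : ℝ) := by
            rw [Fi_eq r 0 r (by omega)]
            simp only [Nat.choose_self, Nat.cast_one, zero_mul, add_zero]
            exact_mod_cast card_pos.2 hs'segne
          have hcon := ih hrpos n r 0 le_rfl le_rfl zero_le_one (initSeg s') hSized' hseg1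
          have hcrr : Fi r 0 (r-1) = (r : ℝ) := by
            rw [Fi_eq r 0 (r-1)]
            · simp only [zero_mul, add_zero]
              norm_cast
              rw [show r - 1 = r - 1 from rfl, Nat.choose_symm (show 1 ≤ r by omega),
                Nat.choose_one_right]
            · omega
          rw [hcrr] at hcon
          refine hsuffices (r : ℝ) ?_ hcon
          -- t * C(a,r-1) ≤ r  given  t * C(a,r) < 1
          have hid : (r : ℝ) * (a.choose r : ℝ) = ((a - r + 1 : ℕ) : ℝ) * (a.choose (r-1) : ℝ) := by
            exact_mod_cast congrArg (Nat.cast (R := ℝ)) (choose_mul_eq a r (by omega) (by omega))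
          have hge1 : (1:ℝ) ≤ ((a - r + 1 : ℕ) : ℝ) := by
            have : 1 ≤ a - r + 1 := by omega
            exact_mod_cast this
          have hcnn : (0:ℝ) ≤ (a.choose (r-1) : ℝ) := by positivity
          nlinarith [mul_nonneg ht0 hcnn]
        · -- T ≥ 1 : pick the interpolation point (b, u)
          set M := Nat.floor T with hMdef
          have hM1 : 1 ≤ M := Nat.le_floor (by exact_mod_cast hT1)
          have hMT : (M : ℝ) ≤ T := Nat.floor_le hT0
          have hTM : T < (M : ℝ) + 1 := Nat.lt_floor_add_one T
          have hPr : Nat.choose r r ≤ M := by simpa [Nat.choose_self] using hM1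
          set b := Nat.findGreatest (fun c => Nat.choose c r ≤ M) a with hbdef
          have hbr : r ≤ b := Nat.le_findGreatest (by omega) hPr
          have hba : b ≤ a := Nat.findGreatest_le a
          have hb1 : b.choose r ≤ M := Nat.findGreatest_spec (P := fun c => Nat.choose c r ≤ M) (by omega) hPr
          rcases eq_or_lt_of_le hba with hbeq | hblt
          · -- b = a : forces t = 1
            have h1 : (a.choose r : ℝ) ≤ T := by
              rw [← hbeq]
              exact le_trans (by exact_mod_cast hb1) hMT
            have h2 : T ≤ (a.choose r : ℝ) := by
              rw [hTdef]
              nlinarith [show (0:ℝ) ≤ (a.choose r : ℝ) by positivity]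
            have hseg1 : Fi a 0 r ≤ (#(initSeg s') : ℝ) := by
              rw [Fi_eq a 0 r (by omega)]
              simp only [zero_mul, add_zero]
              linarith
            have hcon := ih hrpos n a 0 (by omega) le_rfl zero_le_one (initSeg s') hSized' hseg1
            have hcon' : (a.choose (r-1) : ℝ) ≤ (#(∂ (initSeg s')) : ℝ) :=
              le_trans (Fi_ge_left a (r-1) le_rfl) hcon
            refine hsuffices ((a.choose (r-1) : ℝ)) ?_ hcon'
            nlinarith [show (0:ℝ) ≤ (a.choose (r-1) : ℝ) by positivity]
          · -- b < a
            have hb2 : M + 1 ≤ (b+1).choose r := by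
              have hnot := Nat.findGreatest_is_greatest (P := fun c => Nat.choose c r ≤ M)
                (show Nat.findGreatest (fun c => Nat.choose c r ≤ M) a < b + 1 by omega) (by omega)
              omega
            have hcbr1 : 0 < b.choose (r-1) := Nat.choose_pos (by omega)
            have hcbr1R : (0:ℝ) < (b.choose (r-1) : ℝ) := by exact_mod_cast hcbr1
            set u := (T - (b.choose r : ℝ)) / (b.choose (r-1) : ℝ) with hudef
            have hbT : ((b.choose r : ℝ)) ≤ T := le_trans (by exact_mod_cast hb1) hMT
            have hu0 : 0 ≤ u := div_nonneg (by linarith) (le_of_lt hcbr1R)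
            have hpasb : (b+1).choose r = b.choose (r-1) + b.choose r := by
              have h := Nat.choose_succ_succ b (r-1)
              simp only [Nat.succ_eq_add_one] at h
              rwa [show r - 1 + 1 = r from by omega] at h
            have hub : T - (b.choose r : ℝ) < (b.choose (r-1) : ℝ) := by
              have : T < ((b+1).choose r : ℝ) := by
                calc T < (M:ℝ) + 1 := hTM
                  _ ≤ ((b+1).choose r : ℝ) := by exact_mod_cast hb2
              rw [hpasb] at this
              push_cast at this
              linarith
            have hu1 : u ≤ 1 := by
              rw [hudef, div_le_one hcbr1R]
              linarith
            have hFib : Fi b u r = T := by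
              rw [Fi_eq b u r (by omega), hudef]
              field_simp
              ring
            have hcon := ih hrpos n b u hbr hu0 hu1 (initSeg s') hSized'
              (by rw [hFib]; exact hT)
            refine hsuffices (Fi b u (r-1)) ?_ hcon
            -- t * C(a,r-1) ≤ Fi b u (r-1) via cross-multiplication
            have hCar : (0:ℝ) < (a.choose r : ℝ) := by
              exact_mod_cast Nat.choose_pos (show r ≤ a by omega)
            rw [← mul_le_mul_iff_of_pos_right hCar]
            have hcr1 : (a.choose (r-1) : ℝ) * (b.choose r : ℝ) ≤
                (a.choose r : ℝ) * (b.choose (r-1) : ℝ) := by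
              exact_mod_cast cross a b r (by omega) (by omega)
            have hcr2 : (a.choose (r-1) : ℝ) * ((b+1).choose r : ℝ) ≤
                (a.choose r : ℝ) * ((b+1).choose (r-1) : ℝ) := by
              exact_mod_cast cross a (b+1) r (by omega) (by omega)
            have hE : t * (a.choose r : ℝ)
                = (1-u) * (b.choose r : ℝ) + u * ((b+1).choose r : ℝ) := by
              have h := hFib
              simp only [Fi] at h
              rw [← hTdef]
              exact h.symm
            have hexp : Fi b u (r-1) * (a.choose r : ℝ) - (t * (a.choose (r-1):ℝ)) * (a.choose r : ℝ)
                = (1-u) * ((a.choose r : ℝ) * (b.choose (r-1) : ℝ) - (a.choose (r-1) : ℝ) * (b.choose r : ℝ))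
                  + u * ((a.choose r : ℝ) * ((b+1).choose (r-1) : ℝ) - (a.choose (r-1) : ℝ) * ((b+1).choose r : ℝ)) := by
              simp only [Fi]
              linear_combination (-(a.choose (r-1) : ℝ)) * hE
            linarith [hexp, mul_nonneg hu0 (sub_nonneg.2 hcr2),
              mul_nonneg (sub_nonneg.2 hu1) (sub_nonneg.2 hcr1)]
    · -- case a < va
      calc Fi a t r ≤ ((a+1).choose r : ℝ) := Fi_le_right a r ht1
        _ ≤ ((va).choose r : ℝ) := by exact_mod_cast Nat.choose_le_choose r (by omega)
        _ ≤ ((va).choose r : ℝ) + (#(∂ (initSeg s')) : ℝ) := le_add_of_nonneg_right (by positivity)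
        _ ≤ (#(∂ 𝒜) : ℝ) := hgoal_shape


/-- `2 * C(n,2) = n * (n-1)` -/
lemma two_choose (n : ℕ) : 2 * n.choose 2 = n * (n - 1) := by
  have := Nat.choose_succ_right_eq n 1
  simp [Nat.choose_one_right] at this
  omega


lemma fnl {p m t D : ℝ} (hp : 2 ≤ p) (hm : 2 ≤ m) (ht0 : 0 ≤ t) (ht1 : t ≤ 1)
    (hD : p + m ≤ D) :
    p^2 * (p - 1 + t*(m+1))^2 * (D*(D-1)) ≤
      (D-m)^2 * (p+t*m)^2 * ((p+m-1)*(p+m-2+2*t)) := by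
  have hX : (0:ℝ) ≤ (p - 1 + t*(m+1))^2 := sq_nonneg _
  have h1 : p*D ≤ (D-m)*(p+m) := by nlinarith [mul_nonneg (by linarith : (0:ℝ) ≤ m) (by linarith : (0:ℝ) ≤ D - p - m)]
  have h2 : p*(D-1) ≤ (D-m)*(p+m-1) := by nlinarith [mul_nonneg (by linarith : (0:ℝ) ≤ m - 1) (by linarith : (0:ℝ) ≤ D - p - m)]
  have hpD : (0:ℝ) ≤ p * D := by nlinarith
  have hpD1 : (0:ℝ) ≤ p * (D-1) := by nlinarith
  have hi : p^2*(D*(D-1)) ≤ (D-m)^2*((p+m)*(p+m-1)) := by nlinarith [mul_le_mul h1 h2 hpD1 (by nlinarith : (0:ℝ) ≤ (D-m)*(p+m))]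
  have key : (p+m-2+2*t)*(p+t*m)^2 - (p+m)*(p - 1 + t*(m+1))^2
      = (1-t)^2 * ((p+t*m)*(2*m-1) - (1-t)*m) := by ring
  have htm : (0:ℝ) ≤ t*m := mul_nonneg ht0 (by linarith)
  have hii : (p+m)*(p - 1 + t*(m+1))^2 ≤ (p+m-2+2*t)*(p+t*m)^2 := by
    have hfac : (0:ℝ) ≤ (p+t*m)*(2*m-1) - (1-t)*m := by nlinarith
    nlinarith [mul_nonneg (sq_nonneg (1-t)) hfac]
  calc p^2 * (p - 1 + t*(m+1))^2 * (D*(D-1))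
      = (p - 1 + t*(m+1))^2 * (p^2*(D*(D-1))) := by ring
    _ ≤ (p - 1 + t*(m+1))^2 * ((D-m)^2*((p+m)*(p+m-1))) := by
        exact mul_le_mul_of_nonneg_left hi hX
    _ = ((D-m)^2*(p+m-1)) * ((p+m)*(p - 1 + t*(m+1))^2) := by ring
    _ ≤ ((D-m)^2*(p+m-1)) * ((p+m-2+2*t)*(p+t*m)^2) := by
        apply mul_le_mul_of_nonneg_left hii
        have : (0:ℝ) ≤ (D-m)^2 := sq_nonneg _
        nlinarith
    _ = (D-m)^2 * (p+t*m)^2 * ((p+m-1)*(p+m-2+2*t)) := by ring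



lemma key_final (ℓ d a : ℕ) (t : ℝ) (kl k1 k2 : ℕ)
    (hℓ : 3 ≤ ℓ) (hla : ℓ ≤ a) (had : a ≤ d)
    (ht0 : 0 ≤ t) (ht1 : t ≤ 1) (htd : a = d → t = 0)
    (hFl : Fi a t ℓ = (kl:ℝ)) (hF1 : Fi a t (ℓ-1) ≤ (k1:ℝ)) (hF2 : Fi a t 2 ≤ (k2:ℝ)) :
    ((ℓ:ℝ) * kl)^2 * (d.choose 2 : ℝ) ≤ (((d:ℝ) - ℓ + 1) * k1)^2 * (k2:ℝ) := by
  have hl1 : 1 ≤ ℓ := by omega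
  have hl11 : 1 ≤ ℓ - 1 := by omega
  have hLA : (ℓ:ℝ) ≤ (a:ℝ) := by exact_mod_cast hla
  have hAD : (a:ℝ) ≤ (d:ℝ) := by exact_mod_cast had
  have hL3 : (3:ℝ) ≤ (ℓ:ℝ) := by exact_mod_cast hℓ
  have hDL : (0:ℝ) < (d:ℝ) - ℓ + 1 := by linarith
  have hBpos : (0:ℝ) < (a.choose (ℓ-1) : ℝ) := by
    exact_mod_cast Nat.choose_pos (show ℓ - 1 ≤ a by omega)
  -- identities
  have id1 : (ℓ:ℝ) * (a.choose ℓ : ℝ) = ((a:ℝ) - ℓ + 1) * (a.choose (ℓ-1) : ℝ) := by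
    have h := choose_mul_eq a ℓ hl1 hla
    calc (ℓ:ℝ) * (a.choose ℓ:ℝ) = ((ℓ * a.choose ℓ : ℕ) : ℝ) := by push_cast; ring
      _ = (((a - ℓ + 1) * a.choose (ℓ-1) : ℕ) : ℝ) := by rw [h]
      _ = ((a:ℝ) - ℓ + 1) * (a.choose (ℓ-1):ℝ) := by push_cast [Nat.cast_sub hla]; ring
  have id2 : ((ℓ:ℝ) - 1) * (a.choose (ℓ-1) : ℝ) = ((a:ℝ) - ℓ + 2) * (a.choose (ℓ-1-1) : ℝ) := by
    have h := choose_mul_eq a (ℓ-1) hl11 (by omega)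
    calc ((ℓ:ℝ) - 1) * (a.choose (ℓ-1):ℝ) = (((ℓ-1) * a.choose (ℓ-1) : ℕ) : ℝ) := by
          push_cast [Nat.cast_sub (show 1 ≤ ℓ by omega)]; ring
      _ = (((a - (ℓ-1) + 1) * a.choose (ℓ-1-1) : ℕ) : ℝ) := by rw [h]
      _ = ((a:ℝ) - ℓ + 2) * (a.choose (ℓ-1-1):ℝ) := by
          push_cast [Nat.cast_sub (show ℓ - 1 ≤ a by omega), Nat.cast_sub (show 1 ≤ ℓ by omega)]
          ring
  have id3 : 2 * (a.choose 2 : ℝ) = (a:ℝ) * ((a:ℝ) - 1) := by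
    have h := two_choose a
    calc (2:ℝ) * (a.choose 2 : ℝ) = ((2 * a.choose 2 : ℕ) : ℝ) := by push_cast; ring
      _ = ((a * (a-1) : ℕ) : ℝ) := by rw [h]
      _ = (a:ℝ) * ((a:ℝ) - 1) := by push_cast [Nat.cast_sub (show 1 ≤ a by omega)]; ring
  have id4 : 2 * (d.choose 2 : ℝ) = (d:ℝ) * ((d:ℝ) - 1) := by
    have h := two_choose d
    calc (2:ℝ) * (d.choose 2 : ℝ) = ((2 * d.choose 2 : ℕ) : ℝ) := by push_cast; ring
      _ = ((d * (d-1) : ℕ) : ℝ) := by rw [h]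
      _ = (d:ℝ) * ((d:ℝ) - 1) := by push_cast [Nat.cast_sub (show 1 ≤ d by omega)]; ring
  have eFl : Fi a t ℓ = (a.choose ℓ : ℝ) + t * (a.choose (ℓ-1) : ℝ) := Fi_eq a t ℓ hl1
  have eF1 : Fi a t (ℓ-1) = (a.choose (ℓ-1) : ℝ) + t * (a.choose (ℓ-1-1) : ℝ) := Fi_eq a t (ℓ-1) hl11
  have eF2 : Fi a t 2 = (a.choose 2 : ℝ) + t * (a:ℝ) := by
    rw [Fi_eq a t 2 (by omega)]
    norm_num [Nat.choose_one_right]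
  have hF1nn : (0:ℝ) ≤ (a.choose (ℓ-1) : ℝ) + t * (a.choose (ℓ-1-1) : ℝ) := by positivity
  have hF2nn : (0:ℝ) ≤ (a.choose 2 : ℝ) + t * (a:ℝ) := by positivity
  have hK1 : (a.choose (ℓ-1) : ℝ) + t * (a.choose (ℓ-1-1) : ℝ) ≤ (k1 : ℝ) := by
    rw [← eF1]; exact hF1
  have hK2 : (a.choose 2 : ℝ) + t * (a:ℝ) ≤ (k2 : ℝ) := by rw [← eF2]; exact hF2
  have hkl : (kl : ℝ) = (a.choose ℓ : ℝ) + t * (a.choose (ℓ-1) : ℝ) := by rw [← hFl, eFl]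
  -- monotone replacement of k1, k2 by the Fi values
  have hmono : (((d:ℝ) - ℓ + 1) * ((a.choose (ℓ-1) : ℝ) + t * (a.choose (ℓ-1-1) : ℝ)))^2
        * ((a.choose 2 : ℝ) + t * (a:ℝ))
      ≤ (((d:ℝ) - ℓ + 1) * k1)^2 * (k2 : ℝ) := by
    have h1 : (0:ℝ) ≤ ((d:ℝ) - ℓ + 1) * ((a.choose (ℓ-1) : ℝ) + t * (a.choose (ℓ-1-1) : ℝ)) := by
      exact mul_nonneg (le_of_lt hDL) hF1nn
    have h2 : ((d:ℝ) - ℓ + 1) * ((a.choose (ℓ-1) : ℝ) + t * (a.choose (ℓ-1-1) : ℝ))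
        ≤ ((d:ℝ) - ℓ + 1) * k1 := mul_le_mul_of_nonneg_left hK1 (le_of_lt hDL)
    exact mul_le_mul (pow_le_pow_left₀ h1 h2 2) hK2 hF2nn (by positivity)
  rw [hkl]
  refine le_trans ?_ hmono
  -- main inequality at the Fi level
  rcases eq_or_lt_of_le had with heq | hlt
  · -- a = d, t = 0
    have ht := htd heq
    subst ht
    simp only [zero_mul, add_zero]
    have hADeq : (a:ℝ) = (d:ℝ) := by exact_mod_cast heq
    have hLB : (ℓ:ℝ) * (a.choose ℓ : ℝ) = ((d:ℝ) - ℓ + 1) * (a.choose (ℓ-1) : ℝ) := by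
      rw [← hADeq]; exact id1
    have hcd : (d.choose 2:ℝ) = (a.choose 2:ℝ) := by rw [heq]
    rw [hLB, hcd]
  · -- a < d : use fnl
    set p := ((a:ℝ) - ℓ + 2) with hp
    set m := ((ℓ:ℝ) - 1) with hm
    have hp2 : (2:ℝ) ≤ p := by rw [hp]; linarith
    have hm2 : (2:ℝ) ≤ m := by rw [hm]; linarith
    have hpmD : p + m ≤ (d:ℝ) := by
      have : (a:ℝ) + 1 ≤ (d:ℝ) := by exact_mod_cast hlt
      rw [hp, hm]; linarith
    have hfnl := fnl hp2 hm2 ht0 ht1 hpmD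
    have hBX : (ℓ:ℝ) * ((a.choose ℓ : ℝ) + t * (a.choose (ℓ-1) : ℝ))
        = (a.choose (ℓ-1) : ℝ) * (p - 1 + t*(m+1)) := by
      rw [hp, hm]
      linear_combination id1
    have hBY : p * ((a.choose (ℓ-1) : ℝ) + t * (a.choose (ℓ-1-1) : ℝ))
        = (a.choose (ℓ-1) : ℝ) * (p + t*m) := by
      rw [hp, hm]
      linear_combination (-t) * id2
    have h2F2 : 2 * ((a.choose 2 : ℝ) + t * (a:ℝ)) = (p+m-1) * (p+m-2+2*t) := by
      rw [hp, hm]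
      linear_combination id3
    have hDm : (d:ℝ) - m = (d:ℝ) - ℓ + 1 := by rw [hm]; ring
    have hppos : (0:ℝ) < 2 * p^2 := by positivity
    rw [← mul_le_mul_iff_of_pos_right hppos]
    calc ((ℓ:ℝ) * ((a.choose ℓ : ℝ) + t * (a.choose (ℓ-1) : ℝ)))^2 * (d.choose 2 : ℝ) * (2 * p^2)
        = (p^2 * (p - 1 + t*(m+1))^2 * ((d:ℝ)*((d:ℝ)-1))) * (a.choose (ℓ-1) : ℝ)^2 := by
          rw [hBX]
          linear_combination ((a.choose (ℓ-1):ℝ) * (p - 1 + t*(m+1)))^2 * p^2 * id4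
      _ ≤ (((d:ℝ)-m)^2 * (p+t*m)^2 * ((p+m-1)*(p+m-2+2*t))) * (a.choose (ℓ-1) : ℝ)^2 :=
          mul_le_mul_of_nonneg_right hfnl (sq_nonneg _)
      _ = ((d:ℝ)-m)^2 * ((a.choose (ℓ-1):ℝ) * (p+t*m))^2 * ((p+m-1)*(p+m-2+2*t)) := by ring
      _ = ((d:ℝ)-m)^2 * (p * ((a.choose (ℓ-1) : ℝ) + t * (a.choose (ℓ-1-1) : ℝ)))^2
            * ((p+m-1)*(p+m-2+2*t)) := by rw [hBY]
      _ = ((d:ℝ)-m)^2 * (p * ((a.choose (ℓ-1) : ℝ) + t * (a.choose (ℓ-1-1) : ℝ)))^2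
            * (2 * ((a.choose 2 : ℝ) + t * (a:ℝ))) := by rw [h2F2]
      _ = (((d:ℝ) - ℓ + 1) * ((a.choose (ℓ-1) : ℝ) + t * (a.choose (ℓ-1-1) : ℝ)))^2
            * ((a.choose 2 : ℝ) + t * (a:ℝ)) * (2 * p^2) := by rw [← hDm]; ring


end KKAux

/-- The number of `j`-cliques in the 1-hop neighborhood graph of `u`
(the subgraph induced on the neighbors of `u`, excluding `u`). -/
noncomputable def nbrCliqueCount {V : Type*} [Fintype V] (G : SimpleGraph V) (u : V) (j : ℕ) : ℕ :=
  {s : Finset V | ↑s ⊆ G.neighborSet u ∧ G.IsNClique j s}.ncard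

/-- The local `ℓ`th-order clustering coefficient of `u`:
`C_ℓ(u) = ℓ·|K_ℓ(N_u)| / ((d_u - ℓ + 1)·|K_{ℓ-1}(N_u)|)`. -/
noncomputable def localCC {V : Type*} [Fintype V] (G : SimpleGraph V) (u : V) (ℓ : ℕ) : ℝ :=
  ((ℓ : ℝ) * nbrCliqueCount G u ℓ) /
    ((((G.neighborSet u).ncard : ℝ) - ℓ + 1) * nbrCliqueCount G u (ℓ - 1))

/-- The ordinary local clustering coefficient `C_2(u)`: the edge density of the
neighborhood graph `N_u`. -/
noncomputable def edgeDensityCC {V : Type*} [Fintype V] (G : SimpleGraph V) (u : V) : ℝ :=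
  (nbrCliqueCount G u 2 : ℝ) / ((G.neighborSet u).ncard.choose 2 : ℝ)


theorem stmt_11 {V : Type*} [Fintype V] (G : SimpleGraph V) (u : V) (ℓ : ℕ)
    (hℓ : 3 ≤ ℓ)
    (hpos : 0 < (((G.neighborSet u).ncard : ℝ) - ℓ + 1) * nbrCliqueCount G u (ℓ - 1)) :
    0 ≤ localCC G u ℓ ∧ localCC G u ℓ ≤ Real.sqrt (edgeDensityCC G u) := by
  classical
  set d := (G.neighborSet u).ncard with hd
  -- decompose hpos
  have hk1nn : (0:ℝ) ≤ (nbrCliqueCount G u (ℓ-1) : ℝ) := Nat.cast_nonneg _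
  have hsplit : 0 < (d:ℝ) - ℓ + 1 ∧ (0:ℝ) < (nbrCliqueCount G u (ℓ-1) : ℝ) := by
    rcases mul_pos_iff.1 hpos with ⟨h1, h2⟩ | ⟨h1, h2⟩
    · exact ⟨h1, h2⟩
    · linarith
  obtain ⟨hdl, hk1pos⟩ := hsplit
  have hloc0 : 0 ≤ localCC G u ℓ := by
    rw [localCC]
    exact div_nonneg (by positivity) (le_of_lt hpos)
  refine ⟨hloc0, ?_⟩
  by_cases hkl0 : nbrCliqueCount G u ℓ = 0
  · rw [localCC, hkl0]
    simp only [Nat.cast_zero, mul_zero, zero_div]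
    exact Real.sqrt_nonneg _
  -- main case
  have hklpos : 1 ≤ nbrCliqueCount G u ℓ := Nat.one_le_iff_ne_zero.2 hkl0
  have hld : ℓ ≤ d := by
    by_contra hcon
    have h1 : d ≤ ℓ - 1 := by omega
    have h2 : (d:ℝ) ≤ (ℓ:ℝ) - 1 := by
      have : ((ℓ - 1 : ℕ) : ℝ) = (ℓ:ℝ) - 1 := by
        push_cast [Nat.cast_sub (show 1 ≤ ℓ by omega)]; ring
      rw [← this]
      exact_mod_cast h1
    linarith
  -- finset versions of the clique counts
  set CF : ℕ → Finset (Finset V) :=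
    fun j => univ.filter (fun s => ↑s ⊆ G.neighborSet u ∧ G.IsNClique j s) with hCF
  have hkCF : ∀ j, nbrCliqueCount G u j = #(CF j) := by
    intro j
    rw [nbrCliqueCount, show {s : Finset V | ↑s ⊆ G.neighborSet u ∧ G.IsNClique j s}
      = ↑(CF j) from by ext s; simp [hCF]]
    exact Set.ncard_coe_finset _
  have hNBfin : (G.neighborSet u).Finite := Set.toFinite _
  have hdNB : d = #hNBfin.toFinset := Set.ncard_eq_toFinset_card _ hNBfin
  have hkle : ∀ j, nbrCliqueCount G u j ≤ d.choose j := by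
    intro j
    rw [hkCF, hdNB, ← card_powersetCard]
    apply card_le_card
    intro s hs
    rw [hCF, mem_filter] at hs
    rw [mem_powersetCard]
    exact ⟨fun x hx => hNBfin.mem_toFinset.2 (hs.2.1 hx), hs.2.2.card_eq⟩
  -- transport to Fin
  set n := Fintype.card V with hn
  set emb : V ↪ Fin n := (Fintype.equivFin V).toEmbedding with hemb
  set 𝒜 : ℕ → Finset (Finset (Fin n)) := fun j => (CF j).image (fun s => s.map emb) with h𝒜
  have h𝒜card : ∀ j, #(𝒜 j) = nbrCliqueCount G u j := by
    intro j
    rw [h𝒜, hkCF]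
    exact card_image_of_injective _ (Finset.map_injective emb)
  have h𝒜sized : ∀ j, ((𝒜 j : Set (Finset (Fin n)))).Sized j := by
    intro j w hw
    rw [mem_coe, h𝒜, mem_image] at hw
    obtain ⟨s, hs, rfl⟩ := hw
    rw [hCF, mem_filter] at hs
    rw [card_map]
    exact hs.2.2.card_eq
  have hshadow : ∀ j, ∂ (𝒜 j) ⊆ 𝒜 (j-1) := by
    intro j B hB
    rw [mem_shadow_iff] at hB
    obtain ⟨w, hw, x, hx, rfl⟩ := hB
    rw [h𝒜, mem_image] at hw
    obtain ⟨s, hs, rfl⟩ := hw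
    rw [mem_map] at hx
    obtain ⟨y, hy, rfl⟩ := hx
    rw [← Finset.map_erase]
    rw [hCF, mem_filter] at hs
    rw [h𝒜, mem_image]
    refine ⟨s.erase y, ?_, rfl⟩
    rw [hCF, mem_filter]
    refine ⟨mem_univ _, fun x hx => hs.2.1 (mem_coe.2 (mem_of_mem_erase (mem_coe.1 hx))), ?_⟩
    rw [SimpleGraph.isNClique_iff]
    constructor
    · exact hs.2.2.1.subset (by exact_mod_cast erase_subset y s)
    · rw [card_erase_of_mem hy, hs.2.2.card_eq]
  -- choice of (a, t)
  set kl := nbrCliqueCount G u ℓ with hkl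
  have hCl1 : ℓ.choose ℓ ≤ kl := by simpa [Nat.choose_self] using hklpos
  set a := Nat.findGreatest (fun c => c.choose ℓ ≤ kl) d with ha
  have hla : ℓ ≤ a := Nat.le_findGreatest hld hCl1
  have had : a ≤ d := Nat.findGreatest_le d
  have hCa : a.choose ℓ ≤ kl := Nat.findGreatest_spec (P := fun c => c.choose ℓ ≤ kl) hld hCl1
  have hBpos : 0 < a.choose (ℓ-1) := Nat.choose_pos (by omega)
  have hBposR : (0:ℝ) < (a.choose (ℓ-1) : ℝ) := by exact_mod_cast hBpos
  set t := ((kl:ℝ) - (a.choose ℓ : ℝ)) / (a.choose (ℓ-1) : ℝ) with hT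
  have ht0 : 0 ≤ t := by
    apply div_nonneg _ (le_of_lt hBposR)
    have : ((a.choose ℓ : ℕ):ℝ) ≤ (kl:ℝ) := by exact_mod_cast hCa
    linarith
  have hpasa : (a+1).choose ℓ = a.choose (ℓ-1) + a.choose ℓ := by
    have h := Nat.choose_succ_succ a (ℓ-1)
    simp only [Nat.succ_eq_add_one] at h
    rwa [show ℓ - 1 + 1 = ℓ from by omega] at h
  have hnum_le : (kl:ℝ) - (a.choose ℓ : ℝ) ≤ (a.choose (ℓ-1) : ℝ) := by
    rcases eq_or_lt_of_le had with heq | hlt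
    · have : kl ≤ a.choose ℓ := by rw [heq]; exact hkle ℓ
      have h2 : (kl:ℝ) ≤ (a.choose ℓ : ℝ) := by exact_mod_cast this
      linarith
    · have hnot := Nat.findGreatest_is_greatest (P := fun c => c.choose ℓ ≤ kl)
        (show Nat.findGreatest (fun c => c.choose ℓ ≤ kl) d < a + 1 by omega) (by omega)
      have h2 : kl < (a+1).choose ℓ := by omega
      have h3 : (kl:ℝ) < ((a+1).choose ℓ : ℝ) := by exact_mod_cast h2
      rw [hpasa] at h3
      push_cast at h3
      linarith
  have ht1 : t ≤ 1 := by
    rw [hT, div_le_one hBposR]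
    exact hnum_le
  have htd : a = d → t = 0 := by
    intro heq
    have h1 : kl ≤ a.choose ℓ := by rw [heq]; exact hkle ℓ
    have h2 : a.choose ℓ ≤ kl := hCa
    have : kl = a.choose ℓ := le_antisymm h1 h2
    rw [hT, this]
    simp
  have hFl : KKAux.Fi a t ℓ = (kl:ℝ) := by
    rw [KKAux.Fi_eq a t ℓ (by omega), hT]
    field_simp
    ring
  -- descent
  have hstep : ∀ j, 1 ≤ j → j ≤ a → KKAux.Fi a t j ≤ (nbrCliqueCount G u j : ℝ) →
      KKAux.Fi a t (j-1) ≤ (nbrCliqueCount G u (j-1) : ℝ) := by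
    intro j h1 hja hcard
    have h := KKAux.LL j h1 n a t hja ht0 ht1 (𝒜 j) (h𝒜sized j)
      (by rw [h𝒜card]; exact hcard)
    refine le_trans h ?_
    have hc := card_le_card (hshadow j)
    rw [h𝒜card] at hc
    exact_mod_cast hc
  have hdown : ∀ i, i ≤ ℓ - 2 → KKAux.Fi a t (ℓ - i) ≤ (nbrCliqueCount G u (ℓ - i) : ℝ) := by
    intro i
    induction i with
    | zero =>
      intro _
      rw [Nat.sub_zero, hFl]
    | succ i ih =>
      intro hi
      have h1 := ih (by omega)
      have h2 := hstep (ℓ - i) (by omega) (by omega) h1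
      rwa [show ℓ - i - 1 = ℓ - (i+1) from by omega] at h2
  have hF1 : KKAux.Fi a t (ℓ-1) ≤ (nbrCliqueCount G u (ℓ-1) : ℝ) := hdown 1 (by omega)
  have hF2 : KKAux.Fi a t 2 ≤ (nbrCliqueCount G u 2 : ℝ) := by
    have h := hdown (ℓ-2) (by omega)
    rwa [show ℓ - (ℓ-2) = 2 from by omega] at h
  have hkey := KKAux.key_final ℓ d a t kl (nbrCliqueCount G u (ℓ-1)) (nbrCliqueCount G u 2)
    hℓ hla had ht0 ht1 htd hFl hF1 hF2
  -- final
  have hcd2 : (0:ℝ) < (d.choose 2 : ℝ) := by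
    exact_mod_cast Nat.choose_pos (show 2 ≤ d by omega)
  have hedge0 : 0 ≤ edgeDensityCC G u := by
    rw [edgeDensityCC]
    positivity
  rw [Real.le_sqrt hloc0 hedge0]
  rw [localCC, edgeDensityCC]
  rw [div_pow, div_le_div_iff₀ (by positivity) hcd2]
  calc ((ℓ:ℝ) * (nbrCliqueCount G u ℓ : ℝ))^2 * (d.choose 2 : ℝ)
      ≤ (((d:ℝ) - ℓ + 1) * (nbrCliqueCount G u (ℓ-1) : ℝ))^2 * (nbrCliqueCount G u 2 : ℝ) := hkey
    _ = (nbrCliqueCount G u 2 : ℝ) * (((d:ℝ) - ℓ + 1) * (nbrCliqueCount G u (ℓ-1) : ℝ))^2 := by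
        ring
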